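/- Let ε > 0, let L be a class of losses ℓ: [0,1] × {0,1} → [−1,1] each of bounded variation (L ⊆ L_BV), let G be a set of groups each with P_g > 0, and let H be a nonempty hypothesis class. If a randomized predictor ((Ω,π), p) is randomized (G,H,ε)-step calibrated, then it is a randomized (L,G,H,20ε)-panpredictor; that is, randomized step calibration implies randomized panprediction with error degraded only by a universal constant factor (one may take the constant 20). -/

import Mathlib

open MeasureTheory ProbabilityTheory Set

noncomputable section

/-- Real value of a Boolean label. -/
def lab (y : Bool) : ℝ := if y then 1 else 0

/-- Conditional expectation of `f` under `D`, given that the group membership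
function `g` evaluates to `true` on the context. -/
def condE {X : Type*} [MeasurableSpace X] (D : Measure (X × Bool)) (g : X → Bool)
    (f : X × Bool → ℝ) : ℝ :=
  ∫ z, f z ∂(D[|{z : X × Bool | g z.1 = true}])

/-- Probability of group `g` under `D`. -/
def Pg {X : Type*} [MeasurableSpace X] (D : Measure (X × Bool)) (g : X → Bool) : ℝ :=
  (D {z : X × Bool | g z.1 = true}).toReal

/-- The set of all partition sums `∑ |f(z_{j+1}) - f(z_j)|` over finite partitions
`0 = z_0 < z_1 < ⋯ < z_m = 1` of `[0,1]`.  `V(f) ≤ C` iff every element is `≤ C`. -/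
def partitionSums (f : ℝ → ℝ) : Set ℝ :=
  {S | ∃ (m : ℕ) (z : ℕ → ℝ), z 0 = 0 ∧ z m = 1 ∧ (∀ i < m, z i < z (i + 1)) ∧
      S = ∑ i ∈ Finset.range m, |f (z (i + 1)) - f (z i)|}

/-- Joint conditional expectation for a randomized predictor: `F` is averaged over
`ω ~ π` drawn independently of `(x, y) ~ D`, conditioned on `g x = true`. -/
def condER {Ω X : Type*} [MeasurableSpace Ω] [MeasurableSpace X]
    (π : Measure Ω) (D : Measure (X × Bool)) (g : X → Bool)
    (F : Ω × (X × Bool) → ℝ) : ℝ :=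
  ∫ u, F u ∂((π.prod D)[|{u : Ω × (X × Bool) | g u.2.1 = true}])

/- ============ Auxiliary material for the proof ============ -/

section Auxiliary
open Filter




/-- partition sums on `[0,t]`. -/
def pSums (f : ℝ → ℝ) (t : ℝ) : Set ℝ :=
  {S | ∃ (m : ℕ) (z : ℕ → ℝ), z 0 = 0 ∧ z m = t ∧ (∀ i < m, z i < z (i + 1)) ∧
      S = ∑ i ∈ Finset.range m, |f (z (i + 1)) - f (z i)|}

lemma pSums_one (f : ℝ → ℝ) : pSums f 1 = partitionSums f := rfl

lemma pSums_nonneg {f : ℝ → ℝ} {t S : ℝ} (hS : S ∈ pSums f t) : 0 ≤ S := by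
  obtain ⟨m, z, -, -, -, rfl⟩ := hS
  exact Finset.sum_nonneg fun i _ => abs_nonneg _

lemma pSums_mem_single {f : ℝ → ℝ} {t : ℝ} (ht : 0 < t) : |f t - f 0| ∈ pSums f t := by
  refine ⟨1, fun i => if i = 0 then 0 else t, by simp, by simp, ?_, by simp⟩
  intro i hi
  interval_cases i
  simpa using ht

lemma pSums_nonempty {f : ℝ → ℝ} {t : ℝ} (ht : 0 < t) : (pSums f t).Nonempty :=
  ⟨_, pSums_mem_single ht⟩

lemma pSums_extend {f : ℝ → ℝ} {t t' : ℝ} (h : t < t') {S : ℝ} (hS : S ∈ pSums f t) :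
    S + |f t' - f t| ∈ pSums f t' := by
  obtain ⟨m, z, hz0, hzm, hmono, rfl⟩ := hS
  refine ⟨m + 1, fun i => if i ≤ m then z i else t', by simp [hz0], by simp, ?_, ?_⟩
  · intro i hi
    rcases lt_or_eq_of_le (Nat.lt_succ_iff.mp hi) with hi' | rfl
    · simp only [if_pos hi'.le, if_pos (Nat.succ_le_of_lt hi')]
      exact hmono i hi'
    · simp [hzm, h]
  · rw [Finset.sum_range_succ]
    congr 1
    · refine Finset.sum_congr rfl fun i hi => ?_
      rw [Finset.mem_range] at hi
      simp [if_pos hi.le, if_pos (Nat.succ_le_of_lt hi), hi]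
    · simp [hzm]

lemma pSums_le {f : ℝ → ℝ} {V : ℝ} (hV : ∀ S ∈ pSums f 1, S ≤ V) {t : ℝ}
    (ht0 : 0 < t) (ht1 : t ≤ 1) : ∀ S ∈ pSums f t, S ≤ V := by
  intro S hS
  rcases eq_or_lt_of_le ht1 with rfl | hlt
  · exact hV S hS
  · have := hV _ (pSums_extend hlt hS)
    nlinarith [abs_nonneg (f 1 - f t)]

/-- The (clamped) variation function of `f` from `0` to `t`. -/
def vf (f : ℝ → ℝ) (t : ℝ) : ℝ := if t ≤ 0 then 0 else sSup (pSums f (min t 1))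

lemma vf_nonpos (f : ℝ → ℝ) {t : ℝ} (ht : t ≤ 0) : vf f t = 0 := if_pos ht

lemma vf_pos_def (f : ℝ → ℝ) {t : ℝ} (ht : 0 < t) : vf f t = sSup (pSums f (min t 1)) :=
  if_neg (not_le.mpr ht)

section vfV
variable {f : ℝ → ℝ} {V : ℝ} (hV : ∀ S ∈ pSums f 1, S ≤ V)
include hV

lemma vf_nonneg (t : ℝ) : 0 ≤ vf f t := by
  rcases le_or_gt t 0 with ht | ht
  · rw [vf_nonpos f ht]
  · rw [vf_pos_def f ht]
    have h1 : 0 < min t 1 := lt_min ht one_pos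
    have hmem := pSums_mem_single (f := f) h1
    calc (0:ℝ) ≤ |f (min t 1) - f 0| := abs_nonneg _
    _ ≤ _ := le_csSup ⟨V, fun S hS => pSums_le hV h1 (min_le_right _ _) S hS⟩ hmem

lemma vf_le (t : ℝ) : vf f t ≤ V := by
  have hVnn : 0 ≤ V := le_trans (pSums_nonneg (pSums_mem_single one_pos)) (hV _ (pSums_mem_single one_pos))
  rcases le_or_gt t 0 with ht | ht
  · rw [vf_nonpos f ht]; exact hVnn
  · rw [vf_pos_def f ht]
    have h1 : 0 < min t 1 := lt_min ht one_pos
    exact csSup_le (pSums_nonempty h1) (pSums_le hV h1 (min_le_right _ _))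

lemma vf_key {s s' : ℝ} (h0 : 0 ≤ s) (hss : s ≤ s') (h1 : s' ≤ 1) :
    vf f s + |f s' - f s| ≤ vf f s' := by
  rcases eq_or_lt_of_le hss with rfl | hlt
  · simp
  have hs' : 0 < s' := lt_of_le_of_lt h0 hlt
  have hmin' : min s' 1 = s' := min_eq_left h1
  have hbdd : BddAbove (pSums f s') := ⟨V, pSums_le hV hs' h1⟩
  rw [vf_pos_def f hs', hmin']
  rcases eq_or_lt_of_le h0 with rfl | h0'
  · rw [vf_nonpos f le_rfl, zero_add]
    exact le_csSup hbdd (pSums_mem_single hs')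
  · rw [vf_pos_def f h0', min_eq_left (le_trans hss h1)]
    rw [← le_sub_iff_add_le]
    refine csSup_le (pSums_nonempty h0') fun S hS => ?_
    rw [le_sub_iff_add_le]
    exact le_csSup hbdd (pSums_extend hlt hS)

end vfV



def clamp (t : ℝ) : ℝ := max 0 (min 1 t)

lemma clamp_mem (t : ℝ) : clamp t ∈ Icc (0:ℝ) 1 :=
  ⟨le_max_left _ _, max_le (by norm_num) (min_le_left _ _)⟩

lemma clamp_mono : Monotone clamp := fun a b hab =>
  max_le_max le_rfl (min_le_min le_rfl hab)

lemma clamp_eq {t : ℝ} (h : t ∈ Icc (0:ℝ) 1) : clamp t = t := by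
  rw [clamp, min_eq_right h.2, max_eq_right h.1]

/-- positive-type part in the decomposition -/
def Rpos (f : ℝ → ℝ) (t : ℝ) : ℝ := (vf f 1 - vf f (clamp t)) + (f (clamp t) - f 1)
def Rneg (f : ℝ → ℝ) (t : ℝ) : ℝ := (vf f 1 - vf f (clamp t)) - (f (clamp t) - f 1)

section dec
variable {f : ℝ → ℝ} {V : ℝ} (hV : ∀ S ∈ pSums f 1, S ≤ V)
include hV

lemma key' {s s' : ℝ} (h0 : 0 ≤ s) (hss : s ≤ s') (h1 : s' ≤ 1) :
    |f s' - f s| ≤ vf f s' - vf f s := by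
  have := vf_key hV h0 hss h1; linarith

lemma Rpos_antitone : Antitone (Rpos f) := by
  intro a b hab
  have h := key' hV (clamp_mem a).1 (clamp_mono hab) (clamp_mem b).2
  have h2 := abs_le.mp h
  rw [Rpos, Rpos]
  have h3 : f (clamp a) - f (clamp b) ≤ vf f (clamp b) - vf f (clamp a) := by
    have := (abs_le.mp (abs_sub_comm (f (clamp b)) (f (clamp a)) ▸ h)).2
    linarith [h2.2]
  linarith

lemma Rneg_antitone : Antitone (Rneg f) := by
  intro a b hab
  have h := key' hV (clamp_mem a).1 (clamp_mono hab) (clamp_mem b).2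
  have h2 := abs_le.mp h
  rw [Rneg, Rneg]
  linarith [h2.1]

lemma Rpos_one : Rpos f 1 = 0 := by
  rw [Rpos, clamp_eq (by norm_num : (1:ℝ) ∈ Icc (0:ℝ) 1)]; ring

lemma Rneg_one : Rneg f 1 = 0 := by
  rw [Rneg, clamp_eq (by norm_num : (1:ℝ) ∈ Icc (0:ℝ) 1)]; ring

lemma Rpos_le (t : ℝ) : Rpos f t ≤ 2 * V := by
  have h1 := key' hV (clamp_mem t).1 (clamp_mem t).2 le_rfl
  have h2 := abs_le.mp h1
  have := vf_le hV 1
  have := vf_nonneg hV (clamp t)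
  rw [Rpos]; linarith [h2.2, (abs_le.mp (abs_sub_comm (f 1) (f (clamp t)) ▸ h1)).2]

lemma Rneg_le (t : ℝ) : Rneg f t ≤ 2 * V := by
  have h1 := key' hV (clamp_mem t).1 (clamp_mem t).2 le_rfl
  have h2 := abs_le.mp h1
  have := vf_le hV 1
  have := vf_nonneg hV (clamp t)
  rw [Rneg]; linarith [h2.1]

lemma dec_eq {s : ℝ} (hs : s ∈ Icc (0:ℝ) 1) :
    f s = f 1 + (Rpos f s - Rneg f s) / 2 := by
  rw [Rpos, Rneg, clamp_eq hs]; ring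

end dec


lemma integrable_of_bdd {U : Type*} [MeasurableSpace U] {μ : Measure U} [IsFiniteMeasure μ]
    {f : U → ℝ} (hf : Measurable f) {C : ℝ} (h : ∀ u, |f u| ≤ C) : Integrable f μ :=
  (integrable_const C).mono' hf.aestronglyMeasurable
    (ae_of_all _ (by simpa [Real.norm_eq_abs] using h))

/-- strict-indicator version of the calibration bound, by dominated convergence -/
lemma strict_bound {U : Type*} [MeasurableSpace U] (μ : Measure U) [IsProbabilityMeasure μ]
    (a t : U → ℝ) (ha : Measurable a) (haB : ∀ u, |a u| ≤ 2)
    (ht : Measurable t) (htm : ∀ u, t u ∈ Icc (0:ℝ) 1)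
    (c : ℝ)
    (hA : ∀ w ∈ Icc (0:ℝ) 1, |∫ u, a u * (if t u ≤ w then 1 else 0) ∂μ| ≤ c)
    {b : ℝ} (hb0 : 0 ≤ b) (hb1 : b ≤ 1) :
    |∫ u, a u * (if t u < b then 1 else 0) ∂μ| ≤ c := by
  have hc : 0 ≤ c := le_trans (abs_nonneg _) (hA 1 (by norm_num))
  rcases eq_or_lt_of_le hb0 with rfl | hbpos
  · have : (fun u => a u * (if t u < 0 then (1:ℝ) else 0)) = fun _ => 0 := by
      funext u; rw [if_neg (not_lt.mpr (htm u).1), mul_zero]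
    rw [this, integral_zero, abs_zero]; exact hc
  · set w : ℕ → ℝ := fun n => b - b * (1 / (n + 1)) with hw_def
    have hw_lt : ∀ n, w n < b := by
      intro n
      have : 0 < b * (1 / (n + 1)) := by positivity
      simp only [hw_def]; linarith
    have hw_mem : ∀ n, w n ∈ Icc (0:ℝ) 1 := by
      intro n
      constructor
      · have h1 : (1:ℝ) / (n + 1) ≤ 1 := by
          rw [div_le_one (by positivity)]; linarith [Nat.cast_nonneg (α := ℝ) n]
        have : b * (1 / (n + 1)) ≤ b * 1 := by
          apply mul_le_mul_of_nonneg_left h1 hb0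
        simp only [hw_def]; linarith
      · have := hw_lt n; linarith
    have hw_tendsto : Tendsto w atTop (nhds b) := by
      have h0 : Tendsto (fun n : ℕ => b * (1 / (n + 1))) atTop (nhds (b * 0)) :=
        tendsto_const_nhds.mul tendsto_one_div_add_atTop_nhds_zero_nat
      have h2 := tendsto_const_nhds (x := b) (f := atTop (α := ℕ)) |>.sub h0
      rw [mul_zero, sub_zero] at h2
      exact h2.congr fun n => by simp [hw_def]
    have key : Tendsto (fun n => ∫ u, a u * (if t u ≤ w n then 1 else 0) ∂μ) atTop
        (nhds (∫ u, a u * (if t u < b then 1 else 0) ∂μ)) := by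
      apply tendsto_integral_of_dominated_convergence (bound := fun _ => 2)
      · intro n
        exact (ha.mul (Measurable.ite (measurableSet_le ht measurable_const)
          measurable_const measurable_const)).aestronglyMeasurable
      · exact integrable_const 2
      · intro n
        refine ae_of_all _ fun u => ?_
        rw [Real.norm_eq_abs, abs_mul]
        calc |a u| * |if t u ≤ w n then (1:ℝ) else 0| ≤ 2 * 1 := by
              apply mul_le_mul (haB u) ?_ (abs_nonneg _) (by norm_num)
              split <;> simp
          _ = 2 := by norm_num
      · refine ae_of_all _ fun u => ?_
        by_cases hu : t u < b
        · rw [if_pos hu]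
          have hev : ∀ᶠ n in atTop, t u < w n := hw_tendsto.eventually (lt_mem_nhds hu)
          refine Tendsto.congr' ?_ tendsto_const_nhds
          filter_upwards [hev] with n hn
          rw [if_pos hn.le]
        · rw [if_neg hu]
          have : ∀ n, (if t u ≤ w n then (1:ℝ) else 0) = 0 := by
            intro n
            rw [if_neg]
            push_neg at hu
            exact not_le.mpr (lt_of_lt_of_le (hw_lt n) hu)
          simp only [this, mul_zero]
          simpa using tendsto_const_nhds
    have := key.abs
    exact le_of_tendsto this (Eventually.of_forall fun n => hA (w n) (hw_mem n))



/-- Core lemma: monotone (antitone, vanishing at 1) test functions are controlled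
by threshold calibration. -/
lemma core {U : Type*} [MeasurableSpace U] (μ : Measure U) [IsProbabilityMeasure μ]
    (a t : U → ℝ) (ha : Measurable a) (haB : ∀ u, |a u| ≤ 2)
    (ht : Measurable t) (htm : ∀ u, t u ∈ Icc (0:ℝ) 1)
    (R : ℝ → ℝ) (hR : Antitone R) (hR1 : R 1 = 0)
    (M : ℝ) (hM : ∀ s, R s ≤ M)
    (c : ℝ)
    (hA : ∀ w ∈ Icc (0:ℝ) 1, |∫ u, a u * (if t u ≤ w then 1 else 0) ∂μ| ≤ c) :
    |∫ u, a u * R (t u) ∂μ| ≤ M * c := by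
  have hc : 0 ≤ c := le_trans (abs_nonneg _) (hA 1 (by norm_num))
  have hRt0 : ∀ u, 0 ≤ R (t u) := fun u => hR1 ▸ hR (htm u).2
  have hM0 : 0 ≤ M := hR1 ▸ hM 1
  rcases eq_or_lt_of_le hM0 with rfl | hMpos
  · have : (fun u => a u * R (t u)) = fun _ => 0 := by
      funext u
      rw [le_antisymm (hM (t u)) (hRt0 u), mul_zero]
    rw [this, integral_zero, abs_zero, zero_mul]
  -- main case M > 0
  have int1 : Integrable (fun u => a u * R (t u)) μ := by
    apply integrable_of_bdd (ha.mul (hR.measurable.comp ht)) (C := 2 * M)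
    intro u
    simp only [Pi.mul_apply, Function.comp_apply]
    rw [abs_mul]
    have h1 : |R (t u)| ≤ M := abs_le.mpr ⟨by linarith [hRt0 u], hM _⟩
    exact mul_le_mul (haB u) h1 (abs_nonneg _) (by norm_num)
  have key : ∀ n : ℕ, 1 ≤ n → |∫ u, a u * R (t u) ∂μ| ≤ M * c + 2 * M / n := by
    intro n hn
    have hnR : (0:ℝ) < n := by exact_mod_cast hn
    set χ : ℕ → U → ℝ := fun i u => if (i : ℝ) * M / n ≤ R (t u) then 1 else 0 with hχ
    set φ : U → ℝ := fun u => (M / n) * ∑ i ∈ Finset.Icc 1 n, χ i u with hφ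
    -- pointwise approximation
    have happrox : ∀ u, 0 ≤ R (t u) - φ u ∧ R (t u) - φ u ≤ M / n := by
      intro u
      set r := R (t u) with hr
      have hr0 : 0 ≤ r := hRt0 u
      have hrM : r ≤ M := hM _
      set x := r * n / M with hx
      have hx0 : 0 ≤ x := by positivity
      have hxn : x ≤ n := by
        rw [hx, div_le_iff₀ hMpos]
        calc r * n ≤ M * n := by nlinarith
        _ = n * M := by ring
      have hfilter : (Finset.Icc 1 n).filter (fun i : ℕ => ((i:ℝ) * M / n ≤ r))
          = Finset.Icc 1 (Nat.floor x) := by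
        ext i
        simp only [Finset.mem_filter, Finset.mem_Icc]
        constructor
        · rintro ⟨⟨h1, h2⟩, h3⟩
          refine ⟨h1, Nat.le_floor ?_⟩
          rw [hx, le_div_iff₀ hMpos]
          rw [div_le_iff₀ hnR] at h3
          linarith
        · rintro ⟨h1, h2⟩
          have hile : (i:ℝ) ≤ x := le_trans (by exact_mod_cast h2) (Nat.floor_le hx0)
          have hiN : i ≤ n := by
            have h4 : (i:ℝ) ≤ (n:ℝ) := le_trans hile hxn
            exact_mod_cast h4
          refine ⟨⟨h1, hiN⟩, ?_⟩
          rw [div_le_iff₀ hnR]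
          rw [hx, le_div_iff₀ hMpos] at hile
          linarith
      have hsum : ∑ i ∈ Finset.Icc 1 n, χ i u = (Nat.floor x : ℝ) := by
        rw [hχ]
        simp only
        rw [Finset.sum_boole, hfilter]
        simp [Nat.card_Icc]
      have hφu : φ u = (M / n) * (Nat.floor x : ℝ) := by rw [hφ]; simp only; rw [hsum]
      have hfloorle : (Nat.floor x : ℝ) ≤ x := Nat.floor_le hx0
      have hfloorgt : x - 1 < (Nat.floor x : ℝ) := by
        have := Nat.lt_floor_add_one x; linarith
      have hMn : (0:ℝ) < M / n := by positivity
      have hcomp : (M / n) * x = r := by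
        rw [hx]; field_simp
      constructor
      · rw [hφu]
        have : (M / n) * (Nat.floor x : ℝ) ≤ (M / n) * x :=
          mul_le_mul_of_nonneg_left hfloorle hMn.le
        rw [hcomp] at this; linarith
      · rw [hφu]
        have : (M / n) * (x - 1) ≤ (M / n) * (Nat.floor x : ℝ) :=
          mul_le_mul_of_nonneg_left hfloorgt.le hMn.le
        rw [mul_sub, hcomp, mul_one] at this
        linarith
    -- each χ i has small correlation with a
    have hχmeas : ∀ i, Measurable (χ i) := by
      intro i
      exact Measurable.ite (measurableSet_le measurable_const (hR.measurable.comp ht))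
        measurable_const measurable_const
    have hχbd : ∀ i u, |a u * χ i u| ≤ 2 := by
      intro i u
      rw [abs_mul, hχ]
      calc |a u| * |if (i:ℝ) * M / n ≤ R (t u) then (1:ℝ) else 0| ≤ 2 * 1 := by
            apply mul_le_mul (haB u) ?_ (abs_nonneg _) (by norm_num)
            split <;> simp
        _ = 2 := by norm_num
    have hχint : ∀ i, Integrable (fun u => a u * χ i u) μ := fun i =>
      integrable_of_bdd (ha.mul (hχmeas i)) (hχbd i)
    have hχcorr : ∀ i ∈ Finset.Icc 1 n, |∫ u, a u * χ i u ∂μ| ≤ c := by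
      intro i hi
      rw [Finset.mem_Icc] at hi
      set L := (i:ℝ) * M / n with hL
      have hLpos : 0 < L := by
        rw [hL]
        have : (1:ℝ) ≤ (i:ℝ) := by exact_mod_cast hi.1
        positivity
      set T : Set ℝ := {s | s ∈ Icc (0:ℝ) 1 ∧ L ≤ R s} with hT
      by_cases hTne : T.Nonempty
      · have hbddT : BddAbove T := ⟨1, fun s hs => hs.1.2⟩
        set b := sSup T with hb
        have hb1 : b ≤ 1 := csSup_le hTne fun s hs => hs.1.2
        have hb0 : 0 ≤ b := by
          obtain ⟨s₀, hs₀⟩ := hTne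
          exact le_trans hs₀.1.1 (le_csSup hbddT hs₀)
        by_cases hbT : L ≤ R b
        · have heq : ∀ u, χ i u = if t u ≤ b then 1 else 0 := by
            intro u
            rw [hχ]
            simp only [← hL]
            congr 1
            simp only [eq_iff_iff]
            constructor
            · intro h
              exact le_csSup hbddT ⟨htm u, h⟩
            · intro h
              exact le_trans hbT (hR h)
          have : (fun u => a u * χ i u) = fun u => a u * (if t u ≤ b then 1 else 0) := by
            funext u; rw [heq]
          rw [this]
          exact hA b ⟨hb0, hb1⟩
        · have heq : ∀ u, χ i u = if t u < b then 1 else 0 := by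
            intro u
            rw [hχ]
            simp only [← hL]
            congr 1
            simp only [eq_iff_iff]
            constructor
            · intro h
              have hmem : t u ∈ T := ⟨htm u, h⟩
              have hle : t u ≤ b := le_csSup hbddT hmem
              rcases lt_or_eq_of_le hle with h' | h'
              · exact h'
              · exact absurd (h' ▸ h) hbT
            · intro h
              obtain ⟨s, hsT, hs⟩ := exists_lt_of_lt_csSup hTne h
              exact le_trans hsT.2 (hR hs.le)
          have : (fun u => a u * χ i u) = fun u => a u * (if t u < b then 1 else 0) := by
            funext u; rw [heq]
          rw [this]
          exact strict_bound μ a t ha haB ht htm c hA hb0 hb1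
      · have heq : ∀ u, χ i u = 0 := by
          intro u
          rw [hχ]
          simp only
          rw [if_neg]
          intro h
          exact hTne ⟨t u, htm u, h⟩
        have : (fun u => a u * χ i u) = fun _ => 0 := by
          funext u; rw [heq, mul_zero]
        rw [this, integral_zero, abs_zero]
        exact hc
    -- integral of a * φ
    have hrepr : (fun u => a u * φ u)
        = fun u => ∑ i ∈ Finset.Icc 1 n, (M / n) * (a u * χ i u) := by
      funext u
      rw [hφ]
      simp only
      rw [Finset.mul_sum, Finset.mul_sum]
      refine Finset.sum_congr rfl fun i _ => by ring
    have hφint : Integrable (fun u => a u * φ u) μ := by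
      rw [hrepr]
      exact integrable_finset_sum _ fun i _ => (hχint i).const_mul _
    have hφcorr : |∫ u, a u * φ u ∂μ| ≤ M * c := by
      rw [hrepr, integral_finset_sum _ fun i _ => (hχint i).const_mul _]
      calc |∑ i ∈ Finset.Icc 1 n, ∫ u, (M / n) * (a u * χ i u) ∂μ|
          ≤ ∑ i ∈ Finset.Icc 1 n, |∫ u, (M / n) * (a u * χ i u) ∂μ| :=
            Finset.abs_sum_le_sum_abs _ _
        _ ≤ ∑ i ∈ Finset.Icc 1 n, (M / n) * c := by
            refine Finset.sum_le_sum fun i hi => ?_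
            rw [integral_const_mul, abs_mul, abs_of_nonneg (by positivity : (0:ℝ) ≤ M / n)]
            exact mul_le_mul_of_nonneg_left (hχcorr i hi) (by positivity)
        _ = M * c := by
            rw [Finset.sum_const, Nat.card_Icc]
            simp only [nsmul_eq_mul]
            push_cast [Nat.add_sub_cancel]
            field_simp
    -- error term
    have herr : |∫ u, a u * R (t u) ∂μ - ∫ u, a u * φ u ∂μ| ≤ 2 * M / n := by
      rw [← integral_sub int1 hφint]
      have hbd : ∀ u, |a u * R (t u) - a u * φ u| ≤ 2 * (M / n) := by
        intro u
        rw [← mul_sub, abs_mul]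
        have h1 := (happrox u).1
        have h2 := (happrox u).2
        have : |R (t u) - φ u| ≤ M / n := abs_le.mpr ⟨by linarith [show (0:ℝ) < M/n by positivity], h2⟩
        exact mul_le_mul (haB u) this (abs_nonneg _) (by norm_num)
      calc |∫ u, (a u * R (t u) - a u * φ u) ∂μ|
          ≤ ∫ u, |a u * R (t u) - a u * φ u| ∂μ := by
            simpa [Real.norm_eq_abs] using
              norm_integral_le_integral_norm (fun u => a u * R (t u) - a u * φ u) (μ := μ)
        _ ≤ ∫ _, 2 * (M / n) ∂μ := by
            refine integral_mono (int1.sub hφint).abs (integrable_const _) hbd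
        _ = 2 * (M / n) := by simp
        _ = 2 * M / n := by ring
    calc |∫ u, a u * R (t u) ∂μ|
        ≤ |∫ u, a u * φ u ∂μ| + |∫ u, a u * R (t u) ∂μ - ∫ u, a u * φ u ∂μ| := by
          have := abs_sub_abs_le_abs_sub (∫ u, a u * R (t u) ∂μ) (∫ u, a u * φ u ∂μ)
          linarith
      _ ≤ M * c + 2 * M / n := add_le_add hφcorr herr
  -- pass to the limit
  refine le_of_forall_sub_le fun ε hε => ?_
  obtain ⟨n, hngt⟩ := exists_nat_gt (max 1 (2 * M / ε))
  have hn1 : 1 ≤ n := by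
    have h1 : (1:ℝ) < n := lt_of_le_of_lt (le_max_left _ _) hngt
    exact_mod_cast h1.le
  have hnR : (0:ℝ) < n := by exact_mod_cast hn1
  have hlt : 2 * M / n < ε := by
    have h1 : 2 * M / ε < n := lt_of_le_of_lt (le_max_right _ _) hngt
    rw [div_lt_iff₀ hnR]
    rw [div_lt_iff₀ hε] at h1
    linarith
  have := key n hn1
  linarith



lemma cond_map_snd {Ω X : Type*} [MeasurableSpace Ω] [MeasurableSpace X]
    (π : Measure Ω) [IsProbabilityMeasure π]
    (D : Measure (X × Bool)) [IsProbabilityMeasure D]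
    {Sg : Set (X × Bool)} (hSg : MeasurableSet Sg) :
    ((π.prod D)[|Prod.snd ⁻¹' Sg]).map Prod.snd = D[|Sg] := by
  have hpre : ∀ B : Set (X × Bool), (Prod.snd ⁻¹' B : Set (Ω × (X × Bool))) = univ ×ˢ B := by
    intro B; ext u; simp
  have hmeasS : MeasurableSet (Prod.snd ⁻¹' Sg : Set (Ω × (X × Bool))) :=
    measurable_snd hSg
  ext B hB
  rw [Measure.map_apply measurable_snd hB, cond_apply hmeasS, cond_apply hSg]
  have h1 : (π.prod D) (Prod.snd ⁻¹' Sg) = D Sg := by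
    rw [hpre, Measure.prod_prod, measure_univ, one_mul]
  have h2 : (π.prod D) (Prod.snd ⁻¹' Sg ∩ Prod.snd ⁻¹' B) = D (Sg ∩ B) := by
    rw [← preimage_inter, hpre, Measure.prod_prod, measure_univ, one_mul]
  rw [h1, ← preimage_inter] at *
  rw [h2]

lemma condER_eq_condE' {Ω X : Type*} [MeasurableSpace Ω] [MeasurableSpace X]
    (π : Measure Ω) [IsProbabilityMeasure π]
    (D : Measure (X × Bool)) [IsProbabilityMeasure D]
    {g : X → Bool} (hg : Measurable g)
    (f : X × Bool → ℝ) (hf : Measurable f) :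
    (∫ u, f u.2 ∂((π.prod D)[|{u : Ω × (X × Bool) | g u.2.1 = true}]))
      = ∫ z, f z ∂(D[|{z : X × Bool | g z.1 = true}]) := by
  have hSg : MeasurableSet {z : X × Bool | g z.1 = true} :=
    (hg.comp measurable_fst) (measurableSet_singleton true)
  have hset : {u : Ω × (X × Bool) | g u.2.1 = true}
      = Prod.snd ⁻¹' {z : X × Bool | g z.1 = true} := rfl
  rw [hset, ← cond_map_snd π D hSg,
    integral_map measurable_snd.aemeasurable hf.aestronglyMeasurable]

end Auxiliary

set_option maxHeartbeats 1000000

/-- A randomized `(G, H, ε)`-step calibrated predictor is a randomized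
`(L, G, H, 20ε)`-panpredictor. -/
theorem stmt9 {Ω X : Type*} [MeasurableSpace Ω] [MeasurableSpace X]
    (π : Measure Ω) [IsProbabilityMeasure π]
    (D : Measure (X × Bool)) [IsProbabilityMeasure D]
    (ε : ℝ) (hε : 0 < ε)
    -- the loss class L ⊆ L_BV
    (L : Set (ℝ → Bool → ℝ))
    (hLmeas : ∀ ℓ ∈ L, ∀ y : Bool, Measurable (fun q => ℓ q y))
    (hLbdd : ∀ ℓ ∈ L, ∀ q ∈ Icc (0:ℝ) 1, ∀ y : Bool, ℓ q y ∈ Icc (-1:ℝ) 1)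
    (hLBV : ∀ ℓ ∈ L, ∀ y : Bool, ∀ S ∈ partitionSums (fun q => ℓ q y), S ≤ 1)
    (G : Set (X → Bool)) (hGmeas : ∀ g ∈ G, Measurable g)
    (hGpos : ∀ g ∈ G, 0 < Pg D g)
    (H : Set (X → ℝ)) (hHne : H.Nonempty)
    (hHmeas : ∀ h ∈ H, Measurable h)
    (hHrange : ∀ h ∈ H, ∀ x, h x ∈ Icc (0:ℝ) 1)
    -- post-processings k ℓ for each loss ℓ ∈ L
    (k : (ℝ → Bool → ℝ) → ℝ → ℝ)
    (hkmeas : ∀ ℓ ∈ L, Measurable (k ℓ))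
    (hkrange : ∀ ℓ ∈ L, ∀ q ∈ Icc (0:ℝ) 1, k ℓ q ∈ Icc (0:ℝ) 1)
    (hkopt : ∀ ℓ ∈ L, ∀ q ∈ Icc (0:ℝ) 1, ∀ yhat ∈ Icc (0:ℝ) 1,
      q * ℓ (k ℓ q) true + (1 - q) * ℓ (k ℓ q) false ≤ q * ℓ yhat true + (1 - q) * ℓ yhat false)
    -- the randomized predictor: jointly measurable p : Ω × X → [0,1]
    (p : Ω × X → ℝ) (hpmeas : Measurable p) (hprange : ∀ u, p u ∈ Icc (0:ℝ) 1)
    -- randomized (G, H, ε)-step calibration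
    (hcal : ∀ v ∈ Icc (0:ℝ) 1, ∀ w ∈ Icc (0:ℝ) 1, ∀ h ∈ H, ∀ g ∈ G,
      |condER π D g (fun u => (lab u.2.2 - p (u.1, u.2.1)) *
        (if p (u.1, u.2.1) ≤ v then 1 else 0) * (if h u.2.1 ≤ w then 1 else 0))| ≤
        ε * Real.sqrt (1 / Pg D g)) :
    -- conclusion: randomized (L, G, H, 20 ε)-panprediction
    ∀ ℓ ∈ L, ∀ g ∈ G,
      condER π D g (fun u => ℓ (k ℓ (p (u.1, u.2.1))) u.2.2) ≤
        sInf ((fun h => condE D g (fun z => ℓ (h z.1) z.2)) '' H) +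
          20 * ε * Real.sqrt (1 / Pg D g) := by
  intro ℓ hℓ g hg
  obtain ⟨h₀, hh₀⟩ := hHne
  have hgm : Measurable g := hGmeas g hg
  -- the conditional measure
  have hSgm : MeasurableSet {z : X × Bool | g z.1 = true} :=
    (hgm.comp measurable_fst) (measurableSet_singleton true)
  have hSm : MeasurableSet {u : Ω × (X × Bool) | g u.2.1 = true} :=
    ((hgm.comp measurable_fst).comp measurable_snd) (measurableSet_singleton true)
  have hPg : 0 < Pg D g := hGpos g hg
  have hDSg : D {z : X × Bool | g z.1 = true} ≠ 0 := by
    intro h0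
    rw [Pg, h0] at hPg
    simp at hPg
  have hprodS : (π.prod D) {u : Ω × (X × Bool) | g u.2.1 = true}
      = D {z : X × Bool | g z.1 = true} := by
    have hpre : {u : Ω × (X × Bool) | g u.2.1 = true}
        = (univ : Set Ω) ×ˢ {z : X × Bool | g z.1 = true} := by
      ext u; simp
    rw [hpre, Measure.prod_prod, measure_univ, one_mul]
  unfold condER
  set μ := (π.prod D)[|{u : Ω × (X × Bool) | g u.2.1 = true}] with hμ
  haveI hμprob : IsProbabilityMeasure μ := by
    rw [hμ]
    exact cond_isProbabilityMeasure (by rw [hprodS]; exact hDSg)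
  set c := ε * Real.sqrt (1 / Pg D g) with hc_def
  have hc : 0 ≤ c := by positivity
  -- basic objects
  set a : Ω × (X × Bool) → ℝ := fun u => lab u.2.2 - p (u.1, u.2.1) with ha_def
  have ham : Measurable a := by
    rw [ha_def]
    apply Measurable.sub
    · have : (fun u : Ω × (X × Bool) => lab u.2.2)
          = fun u => if u.2.2 = true then (1:ℝ) else 0 := by
        funext u; cases hy : u.2.2 <;> simp [lab, hy]
      rw [this]
      exact Measurable.ite ((measurable_snd.comp measurable_snd)
        (measurableSet_singleton true)) measurable_const measurable_const
    · exact hpmeas.comp (measurable_fst.prodMk (measurable_fst.comp measurable_snd))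
  have haB : ∀ u, |a u| ≤ 2 := by
    intro u
    have h1 := (hprange (u.1, u.2.1)).1
    have h2 := (hprange (u.1, u.2.1)).2
    rw [ha_def]
    cases hy : u.2.2 <;> simp [lab, hy, abs_le] <;> constructor <;> linarith
  have hpm1 : Measurable (fun u : Ω × (X × Bool) => p (u.1, u.2.1)) :=
    hpmeas.comp (measurable_fst.prodMk (measurable_fst.comp measurable_snd))
  have ht1m : ∀ u : Ω × (X × Bool), p (u.1, u.2.1) ∈ Icc (0:ℝ) 1 :=
    fun u => hprange _
  -- calibration bound, version for thresholds on the prediction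
  have hA1 : ∀ w ∈ Icc (0:ℝ) 1,
      |∫ u, a u * (if p (u.1, u.2.1) ≤ w then 1 else 0) ∂μ| ≤ c := by
    intro w hw
    have h2 := hcal w hw 1 ⟨zero_le_one, le_rfl⟩ h₀ hh₀ g hg
    unfold condER at h2
    rw [← hμ, ← hc_def] at h2
    have hfun : (fun u : Ω × (X × Bool) => (lab u.2.2 - p (u.1, u.2.1)) *
          (if p (u.1, u.2.1) ≤ w then 1 else 0) * (if h₀ u.2.1 ≤ 1 then 1 else 0))
        = fun u => a u * (if p (u.1, u.2.1) ≤ w then 1 else 0) := by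
      funext u
      rw [if_pos (hHrange h₀ hh₀ u.2.1).2, mul_one, ha_def]
    rw [hfun] at h2
    exact h2
  have habsa : |∫ u, a u ∂μ| ≤ c := by
    have h2 := hA1 1 ⟨zero_le_one, le_rfl⟩
    have hfun : (fun u : Ω × (X × Bool) => a u * (if p (u.1, u.2.1) ≤ 1 then 1 else 0))
        = fun u => a u := by
      funext u
      rw [if_pos (ht1m u).2, mul_one]
    rw [hfun] at h2
    exact h2
  have ia : Integrable a μ := integrable_of_bdd ham haB
  clear_value μ a c
  -- loss bounds
  have hbd1 : ∀ q ∈ Icc (0:ℝ) 1, ∀ y : Bool, |ℓ q y| ≤ 1 := fun q hq y =>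
    abs_le.mpr ⟨(hLbdd ℓ hℓ q hq y).1, (hLbdd ℓ hℓ q hq y).2⟩
  have hkq : ∀ q ∈ Icc (0:ℝ) 1, k ℓ q ∈ Icc (0:ℝ) 1 := hkrange ℓ hℓ
  -- the general pointwise identity
  have idgen : ∀ (y : Bool) (q s : ℝ), ℓ s y
      = (q * ℓ s true + (1 - q) * ℓ s false) + (lab y - q) * (ℓ s true - ℓ s false) := by
    intro y q s
    cases y <;> simp [lab] <;> ring
  -- ===== step 1 : the discretization function Δ =====
  set Δ : ℝ → ℝ := fun q => ℓ (k ℓ q) true - ℓ (k ℓ q) false with hΔ_def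
  have hΔanti : AntitoneOn Δ (Icc (0:ℝ) 1) := by
    intro q1 hq1 q2 hq2 h12
    rcases eq_or_lt_of_le h12 with rfl | hlt
    · exact le_rfl
    have A := hkopt ℓ hℓ q1 hq1 (k ℓ q2) (hkq q2 hq2)
    have B := hkopt ℓ hℓ q2 hq2 (k ℓ q1) (hkq q1 hq1)
    rw [hΔ_def]
    simp only
    nlinarith [A, B, hlt]
  have hΔbd : ∀ q ∈ Icc (0:ℝ) 1, |Δ q| ≤ 2 := by
    intro q hq
    have h1 := hbd1 (k ℓ q) (hkq q hq) true
    have h2 := hbd1 (k ℓ q) (hkq q hq) false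
    rw [hΔ_def]
    simp only
    rw [abs_le] at *
    constructor <;> linarith [h1.1, h1.2, h2.1, h2.2]
  set RΔ : ℝ → ℝ := fun s => Δ (clamp s) - Δ 1 with hRΔ_def
  have hRΔanti : Antitone RΔ := by
    intro s s' hss'
    rw [hRΔ_def]
    exact sub_le_sub_right
      (hΔanti (clamp_mem s) (clamp_mem s') (clamp_mono hss')) _
  have hRΔ1 : RΔ 1 = 0 := by
    rw [hRΔ_def]
    simp only
    rw [clamp_eq ⟨zero_le_one, le_rfl⟩, sub_self]
  have hRΔle : ∀ s, RΔ s ≤ 4 := by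
    intro s
    have h1 := abs_le.mp (hΔbd (clamp s) (clamp_mem s))
    have h2 := abs_le.mp (hΔbd 1 ⟨zero_le_one, le_rfl⟩)
    rw [hRΔ_def]
    simp only
    linarith [h1.2, h2.1]
  have hcoreΔ : |∫ u, a u * RΔ (p (u.1, u.2.1)) ∂μ| ≤ 4 * c :=
    core μ a (fun u => p (u.1, u.2.1)) ham haB hpm1 ht1m RΔ hRΔanti hRΔ1 4 hRΔle c hA1
  clear_value RΔ Δ
  -- ===== step 3 material : ψ and its decomposition =====
  set ψ : ℝ → ℝ := fun q => ℓ q true - ℓ q false with hψ_def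
  have hψBV : ∀ S ∈ pSums ψ 1, S ≤ 2 := by
    rintro S ⟨m, z, hz0, hzm, hmono, rfl⟩
    have h1 := hLBV ℓ hℓ true (∑ i ∈ Finset.range m, |ℓ (z (i + 1)) true - ℓ (z i) true|)
      ⟨m, z, hz0, hzm, hmono, rfl⟩
    have h0 := hLBV ℓ hℓ false (∑ i ∈ Finset.range m, |ℓ (z (i + 1)) false - ℓ (z i) false|)
      ⟨m, z, hz0, hzm, hmono, rfl⟩
    calc ∑ i ∈ Finset.range m, |ψ (z (i + 1)) - ψ (z i)|
        ≤ ∑ i ∈ Finset.range m,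
            (|ℓ (z (i + 1)) true - ℓ (z i) true| + |ℓ (z (i + 1)) false - ℓ (z i) false|) := by
          refine Finset.sum_le_sum fun i _ => ?_
          rw [hψ_def]
          simp only
          have : (ℓ (z (i+1)) true - ℓ (z (i+1)) false) - (ℓ (z i) true - ℓ (z i) false)
              = (ℓ (z (i+1)) true - ℓ (z i) true) - (ℓ (z (i+1)) false - ℓ (z i) false) := by
            ring
          rw [this]
          exact abs_sub _ _
      _ = (∑ i ∈ Finset.range m, |ℓ (z (i + 1)) true - ℓ (z i) true|)
          + ∑ i ∈ Finset.range m, |ℓ (z (i + 1)) false - ℓ (z i) false| :=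
          Finset.sum_add_distrib
      _ ≤ 1 + 1 := add_le_add h1 h0
      _ = 2 := by norm_num
  have hψbd : ∀ q ∈ Icc (0:ℝ) 1, |ψ q| ≤ 2 := by
    intro q hq
    have h1 := abs_le.mp (hbd1 q hq true)
    have h2 := abs_le.mp (hbd1 q hq false)
    rw [hψ_def]
    simp only
    rw [abs_le]
    constructor <;> linarith [h1.1, h1.2, h2.1, h2.2]
  have hRple : ∀ s, Rpos ψ s ≤ 4 := by
    intro s
    have := Rpos_le hψBV s
    linarith
  have hRmle : ∀ s, Rneg ψ s ≤ 4 := by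
    intro s
    have := Rneg_le hψBV s
    linarith
  clear_value ψ
  -- ===== the per-hypothesis bound =====
  have hbound : ∀ h ∈ H, (∫ u, ℓ (k ℓ (p (u.1, u.2.1))) u.2.2 ∂μ)
      ≤ condE D g (fun z => ℓ (h z.1) z.2) + 12 * c := by
    intro h hh
    have hhm : Measurable h := hHmeas h hh
    have ht2m : Measurable (fun u : Ω × (X × Bool) => h u.2.1) :=
      hhm.comp (measurable_fst.comp measurable_snd)
    have ht2r : ∀ u : Ω × (X × Bool), h u.2.1 ∈ Icc (0:ℝ) 1 := fun u => hHrange h hh _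
    -- calibration bound, version for thresholds on h
    have hA2 : ∀ w ∈ Icc (0:ℝ) 1,
        |∫ u, a u * (if h u.2.1 ≤ w then 1 else 0) ∂μ| ≤ c := by
      intro w hw
      have h2 := hcal 1 ⟨zero_le_one, le_rfl⟩ w hw h hh g hg
      unfold condER at h2
      rw [← hμ, ← hc_def] at h2
      have hfun : (fun u : Ω × (X × Bool) => (lab u.2.2 - p (u.1, u.2.1)) *
            (if p (u.1, u.2.1) ≤ 1 then 1 else 0) * (if h u.2.1 ≤ w then 1 else 0))
          = fun u => a u * (if h u.2.1 ≤ w then 1 else 0) := by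
        funext u
        rw [if_pos (ht1m u).2, mul_one, ha_def]
      rw [hfun] at h2
      exact h2
    -- measurability of component functions
    have mkp : Measurable (fun u : Ω × (X × Bool) => k ℓ (p (u.1, u.2.1))) :=
      (hkmeas ℓ hℓ).comp hpm1
    have mℓ : ∀ (y : Bool) {s : Ω × (X × Bool) → ℝ}, Measurable s →
        Measurable (fun u => ℓ (s u) y) := fun y _ hs => (hLmeas ℓ hℓ y).comp hs
    -- integrable pieces
    have iB1 : Integrable (fun u : Ω × (X × Bool) =>
        p (u.1, u.2.1) * ℓ (k ℓ (p (u.1, u.2.1))) true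
        + (1 - p (u.1, u.2.1)) * ℓ (k ℓ (p (u.1, u.2.1))) false) μ := by
      apply integrable_of_bdd ((hpm1.mul (mℓ true mkp)).add
        ((measurable_const.sub hpm1).mul (mℓ false mkp))) (C := 2)
      intro u
      have h1 := abs_le.mp (hbd1 _ (hkq _ (ht1m u)) true)
      have h2 := abs_le.mp (hbd1 _ (hkq _ (ht1m u)) false)
      have h3 := (ht1m u).1
      have h4 := (ht1m u).2
      simp only [Pi.add_apply, Pi.mul_apply, Pi.sub_apply]
      rw [abs_le]
      constructor <;> nlinarith
    have iB2 : Integrable (fun u : Ω × (X × Bool) => a u * RΔ (p (u.1, u.2.1))) μ := by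
      apply integrable_of_bdd (ham.mul (hRΔanti.measurable.comp hpm1)) (C := 8)
      intro u
      simp only [Pi.mul_apply, Function.comp_apply]
      have h1 := haB u
      have h2 := hRΔle (p (u.1, u.2.1))
      have h3 : (0:ℝ) ≤ RΔ (p (u.1, u.2.1)) := by
        rw [← hRΔ1]
        exact hRΔanti (ht1m u).2
      rw [abs_mul]
      have : |RΔ (p (u.1, u.2.1))| ≤ 4 := abs_le.mpr ⟨by linarith, h2⟩
      nlinarith [abs_nonneg (a u)]
    have iB3 : Integrable (fun u : Ω × (X × Bool) => Δ 1 * a u) μ := ia.const_mul _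
    have iC1 : Integrable (fun u : Ω × (X × Bool) =>
        p (u.1, u.2.1) * ℓ (h u.2.1) true
        + (1 - p (u.1, u.2.1)) * ℓ (h u.2.1) false) μ := by
      apply integrable_of_bdd ((hpm1.mul (mℓ true ht2m)).add
        ((measurable_const.sub hpm1).mul (mℓ false ht2m))) (C := 2)
      intro u
      have h1 := abs_le.mp (hbd1 _ (ht2r u) true)
      have h2 := abs_le.mp (hbd1 _ (ht2r u) false)
      have h3 := (ht1m u).1
      have h4 := (ht1m u).2
      simp only [Pi.add_apply, Pi.mul_apply, Pi.sub_apply]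
      rw [abs_le]
      constructor <;> nlinarith
    have iD2 : Integrable (fun u : Ω × (X × Bool) => a u * Rpos ψ (h u.2.1)) μ := by
      apply integrable_of_bdd (ham.mul ((Rpos_antitone hψBV).measurable.comp ht2m)) (C := 8)
      intro u
      simp only [Pi.mul_apply, Function.comp_apply]
      have h1 := haB u
      have h2 := hRple (h u.2.1)
      have h3 : (0:ℝ) ≤ Rpos ψ (h u.2.1) := by
        rw [← Rpos_one hψBV]
        exact Rpos_antitone hψBV (ht2r u).2
      rw [abs_mul]
      have : |Rpos ψ (h u.2.1)| ≤ 4 := abs_le.mpr ⟨by linarith, h2⟩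
      nlinarith [abs_nonneg (a u)]
    have iD3 : Integrable (fun u : Ω × (X × Bool) => a u * Rneg ψ (h u.2.1)) μ := by
      apply integrable_of_bdd (ham.mul ((Rneg_antitone hψBV).measurable.comp ht2m)) (C := 8)
      intro u
      simp only [Pi.mul_apply, Function.comp_apply]
      have h1 := haB u
      have h2 := hRmle (h u.2.1)
      have h3 : (0:ℝ) ≤ Rneg ψ (h u.2.1) := by
        rw [← Rneg_one hψBV]
        exact Rneg_antitone hψBV (ht2r u).2
      rw [abs_mul]
      have : |Rneg ψ (h u.2.1)| ≤ 4 := abs_le.mpr ⟨by linarith, h2⟩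
      nlinarith [abs_nonneg (a u)]
    have iD1 : Integrable (fun u : Ω × (X × Bool) => ψ 1 * a u) μ := ia.const_mul _
    -- identity for the LHS integrand
    have id1 : (fun u : Ω × (X × Bool) => ℓ (k ℓ (p (u.1, u.2.1))) u.2.2)
        = fun u => (p (u.1, u.2.1) * ℓ (k ℓ (p (u.1, u.2.1))) true
            + (1 - p (u.1, u.2.1)) * ℓ (k ℓ (p (u.1, u.2.1))) false)
          + (a u * RΔ (p (u.1, u.2.1)) + Δ 1 * a u) := by
      funext u
      have hid := idgen u.2.2 (p (u.1, u.2.1)) (k ℓ (p (u.1, u.2.1)))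
      have hcl : RΔ (p (u.1, u.2.1)) = Δ (p (u.1, u.2.1)) - Δ 1 := by
        rw [hRΔ_def]
        simp only
        rw [clamp_eq (ht1m u)]
      rw [hid, hcl, ha_def, hΔ_def]
      simp only
      ring
    -- identity for the h-integrand
    have id2 : (fun u : Ω × (X × Bool) => ℓ (h u.2.1) u.2.2)
        = fun u => (p (u.1, u.2.1) * ℓ (h u.2.1) true
            + (1 - p (u.1, u.2.1)) * ℓ (h u.2.1) false)
          + (ψ 1 * a u + ((1:ℝ)/2) * (a u * Rpos ψ (h u.2.1))
              - ((1:ℝ)/2) * (a u * Rneg ψ (h u.2.1))) := by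
      funext u
      have hid := idgen u.2.2 (p (u.1, u.2.1)) (h u.2.1)
      have hdec : ψ (h u.2.1) = ψ 1 + (Rpos ψ (h u.2.1) - Rneg ψ (h u.2.1)) / 2 :=
        dec_eq hψBV (ht2r u)
      have hψval : ℓ (h u.2.1) true - ℓ (h u.2.1) false = ψ (h u.2.1) := by
        rw [hψ_def]
      rw [hid, hψval, hdec, ha_def]
      simp only
      ring
    -- split the LHS integral
    have split1 : (∫ u, ℓ (k ℓ (p (u.1, u.2.1))) u.2.2 ∂μ)
        = (∫ u, (p (u.1, u.2.1) * ℓ (k ℓ (p (u.1, u.2.1))) true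
            + (1 - p (u.1, u.2.1)) * ℓ (k ℓ (p (u.1, u.2.1))) false) ∂μ)
          + ((∫ u, a u * RΔ (p (u.1, u.2.1)) ∂μ) + Δ 1 * ∫ u, a u ∂μ) := by
      have iB23 : Integrable (fun u : Ω × (X × Bool) =>
          a u * RΔ (p (u.1, u.2.1)) + Δ 1 * a u) μ := iB2.add iB3
      rw [id1, integral_add iB1 iB23, integral_add iB2 iB3, integral_const_mul]
    -- split the h integral
    have split2 : (∫ u, ℓ (h u.2.1) u.2.2 ∂μ)
        = (∫ u, (p (u.1, u.2.1) * ℓ (h u.2.1) true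
            + (1 - p (u.1, u.2.1)) * ℓ (h u.2.1) false) ∂μ)
          + (ψ 1 * (∫ u, a u ∂μ)
            + ((1:ℝ)/2) * (∫ u, a u * Rpos ψ (h u.2.1) ∂μ)
            - ((1:ℝ)/2) * (∫ u, a u * Rneg ψ (h u.2.1) ∂μ)) := by
      have iD2h : Integrable (fun u : Ω × (X × Bool) =>
          ((1:ℝ)/2) * (a u * Rpos ψ (h u.2.1))) μ := iD2.const_mul _
      have iD3h : Integrable (fun u : Ω × (X × Bool) =>
          ((1:ℝ)/2) * (a u * Rneg ψ (h u.2.1))) μ := iD3.const_mul _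
      have iD12 : Integrable (fun u : Ω × (X × Bool) =>
          ψ 1 * a u + ((1:ℝ)/2) * (a u * Rpos ψ (h u.2.1))) μ := iD1.add iD2h
      have iD123 : Integrable (fun u : Ω × (X × Bool) =>
          ψ 1 * a u + ((1:ℝ)/2) * (a u * Rpos ψ (h u.2.1))
            - ((1:ℝ)/2) * (a u * Rneg ψ (h u.2.1))) μ := iD12.sub iD3h
      rw [id2, integral_add iC1 iD123, integral_sub iD12 iD3h,
        integral_add iD1 iD2h, integral_const_mul, integral_const_mul, integral_const_mul]
    -- the surrogate-loss comparison
    have hmono : (∫ u, (p (u.1, u.2.1) * ℓ (k ℓ (p (u.1, u.2.1))) true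
            + (1 - p (u.1, u.2.1)) * ℓ (k ℓ (p (u.1, u.2.1))) false) ∂μ)
        ≤ ∫ u, (p (u.1, u.2.1) * ℓ (h u.2.1) true
            + (1 - p (u.1, u.2.1)) * ℓ (h u.2.1) false) ∂μ := by
      refine integral_mono iB1 iC1 fun u => ?_
      exact hkopt ℓ hℓ (p (u.1, u.2.1)) (ht1m u) (h u.2.1) (ht2r u)
    -- core bounds for the two Rpos/Rneg pieces
    have hcoreP : |∫ u, a u * Rpos ψ (h u.2.1) ∂μ| ≤ 4 * c :=
      core μ a (fun u => h u.2.1) ham haB ht2m ht2r (Rpos ψ) (Rpos_antitone hψBV)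
        (Rpos_one hψBV) 4 hRple c hA2
    have hcoreM : |∫ u, a u * Rneg ψ (h u.2.1) ∂μ| ≤ 4 * c :=
      core μ a (fun u => h u.2.1) ham haB ht2m ht2r (Rneg ψ) (Rneg_antitone hψBV)
        (Rneg_one hψBV) 4 hRmle c hA2
    -- identify the h integral with condE
    have htrans : (∫ u, ℓ (h u.2.1) u.2.2 ∂μ) = condE D g (fun z => ℓ (h z.1) z.2) := by
      have hfm : Measurable (fun z : X × Bool => ℓ (h z.1) z.2) := by
        have : (fun z : X × Bool => ℓ (h z.1) z.2)
            = fun z => if z.2 = true then ℓ (h z.1) true else ℓ (h z.1) false := by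
          funext z; cases hz : z.2 <;> simp [hz]
        rw [this]
        exact Measurable.ite (measurable_snd (measurableSet_singleton true))
          ((hLmeas ℓ hℓ true).comp (hhm.comp measurable_fst))
          ((hLmeas ℓ hℓ false).comp (hhm.comp measurable_fst))
      rw [hμ, condE]
      exact condER_eq_condE' π D hgm _ hfm
    -- put everything together
    have e1 := abs_le.mp hcoreΔ
    have e2 := abs_le.mp hcoreP
    have e3 := abs_le.mp hcoreM
    have e4 := abs_le.mp habsa
    have e5 : |Δ 1 * ∫ u, a u ∂μ| ≤ 2 * c := by
      rw [abs_mul]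
      have hΔ1 := hΔbd 1 ⟨zero_le_one, le_rfl⟩
      have := abs_nonneg (∫ u, a u ∂μ)
      nlinarith [habsa]
    have e5' := abs_le.mp e5
    have e6 : |ψ 1 * ∫ u, a u ∂μ| ≤ 2 * c := by
      rw [abs_mul]
      have hψ1 := hψbd 1 ⟨zero_le_one, le_rfl⟩
      have := abs_nonneg (∫ u, a u ∂μ)
      nlinarith [habsa]
    have e6' := abs_le.mp e6
    rw [split1, ← htrans, split2]
    linarith [hmono, e1.2, e2.1, e2.2, e3.1, e3.2, e5'.2, e6'.1, e6'.2]
  -- ===== conclude via the infimum =====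
  have himne : ((fun h => condE D g (fun z => ℓ (h z.1) z.2)) '' H).Nonempty :=
    ⟨_, mem_image_of_mem _ hh₀⟩
  have h20 : 20 * ε * Real.sqrt (1 / Pg D g) = 20 * c := by
    rw [hc_def]; ring
  rw [h20]
  have hsinf : (∫ u, ℓ (k ℓ (p (u.1, u.2.1))) u.2.2 ∂μ) - 20 * c
      ≤ sInf ((fun h => condE D g (fun z => ℓ (h z.1) z.2)) '' H) := by
    refine le_csInf himne ?_
    rintro b ⟨h, hh, rfl⟩
    have := hbound h hh
    linarith
  linarith

end
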